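/- Let b > 3 and let (a_i) be the sequence in Z/2Z with a_i = 1 for 0 ≤ i ≤ b and satisfying the recurrence a_i = a_{i-1} + a_{i-b-1} for i > b. Write b = 2^e · c with c odd. Then for 0 ≤ q ≤ 2^e and 0 ≤ r < b+1 with (q,r) ≠ (0,0), one has a_{q(b+1)+r} ≡ C(r-1+q, q) (mod 2), where C denotes the binomial coefficient (with the convention C(m, q) = 0 when m < q). -/

import Mathlib

lemma even_choose_of_even_odd {n k : ℕ} (hn : Even n) (hk : Odd k) :
    2 ∣ n.choose k := by
  rcases Nat.eq_zero_or_pos n with rfl | hn0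
  · simp [Nat.choose_eq_zero_of_lt hk.pos]
  · obtain ⟨n', rfl⟩ : ∃ n', n = n' + 1 := ⟨n - 1, by omega⟩
    obtain ⟨k', rfl⟩ : ∃ k', k = k' + 1 := ⟨k - 1, by have := hk.pos; omega⟩
    have h := Nat.add_one_mul_choose_eq n' k'
    have h2 : 2 ∣ (n' + 1).choose (k' + 1) * (k' + 1) := by
      rw [← h]
      exact Dvd.dvd.mul_right (even_iff_two_dvd.mp hn) _
    rcases (Nat.Prime.dvd_mul Nat.prime_two).mp h2 with h3 | h3
    · exact h3
    · exact absurd h3 (by simpa [Nat.odd_iff, Nat.two_dvd_ne_zero] using hk)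

lemma even_choose_aux : ∀ e c m : ℕ, 0 < c → 0 < m → m < 2 ^ e →
    2 ∣ (2 ^ e * c - 1 + m).choose m := by
  intro e
  induction e with
  | zero => intro c m _ hm1 hm2; omega
  | succ e ih =>
    intro c m hc hm1 hm2
    have hpe : 0 < 2 ^ e := Nat.pow_pos (by norm_num)
    have hd : 0 < 2 ^ e * c := by positivity
    have h2 : 2 ^ (e + 1) * c = 2 * (2 ^ e * c) := by rw [pow_succ]; ring
    rcases Nat.even_or_odd m with hme | hmo
    · obtain ⟨m', rfl⟩ := hme
      have hm'1 : 0 < m' := by omega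
      have hm'2 : m' < 2 ^ e := by rw [pow_succ] at hm2; omega
      have key := ih c m' hc hm'1 hm'2
      have hluc := @Choose.choose_modEq_choose_mod_mul_choose_div_nat
        (2 ^ (e+1) * c - 1 + (m' + m')) (m' + m') 2 ⟨Nat.prime_two⟩
      have hn1 : (2 ^ (e+1) * c - 1 + (m' + m')) % 2 = 1 := by omega
      have hn2 : (2 ^ (e+1) * c - 1 + (m' + m')) / 2 = 2 ^ e * c - 1 + m' := by omega
      have hk1 : (m' + m') % 2 = 0 := by omega
      have hk2 : (m' + m') / 2 = m' := by omega
      rw [hn1, hn2, hk1, hk2] at hluc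
      simp only [Nat.choose_self, Nat.choose_zero_right] at hluc
      have hfin : (2 ^ (e+1) * c - 1 + (m' + m')).choose (m' + m') ≡ 0 [MOD 2] := by
        calc _ ≡ _ [MOD 2] := hluc
        _ ≡ 0 [MOD 2] := by
            rw [Nat.modEq_zero_iff_dvd]
            exact Dvd.dvd.mul_left key 1
      exact (Nat.modEq_zero_iff_dvd).mp hfin
    · apply even_choose_of_even_odd _ hmo
      rw [Nat.even_iff]
      rcases hmo with ⟨t, rfl⟩
      omega

theorem ulam_binary_sequence_pascal (b e c : ℕ) (hb : 3 < b)
    (hc : Odd c) (hbec : b = 2 ^ e * c)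
    (a : ℕ → ZMod 2)
    (hinit : ∀ i ≤ b, a i = 1)
    (hrec : ∀ i : ℕ, a (i + b + 1) = a (i + b) + a i) :
    ∀ q r : ℕ, q ≤ 2 ^ e → r < b + 1 → ¬(q = 0 ∧ r = 0) →
      a (q * (b + 1) + r) = (Nat.choose (r + q - 1) q : ZMod 2) := by
  have hcpos : 0 < c := hc.pos
  have main : ∀ q, q ≤ 2 ^ e → ∀ r, r < b + 1 → ¬(q = 0 ∧ r = 0) →
      a (q * (b + 1) + r) = (Nat.choose (r + q - 1) q : ZMod 2) := by
    intro q
    induction q with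
    | zero =>
      intro _ r hr hne
      have hr1 : 1 ≤ r := by omega
      rw [show (0 : ℕ) * (b + 1) + r = r by ring, hinit r (by omega)]
      simp
    | succ q ih =>
      intro hq1
      have hq : q ≤ 2 ^ e := by omega
      have inner : ∀ r, r < b + 1 →
          a ((q + 1) * (b + 1) + r) = (Nat.choose (r + (q + 1) - 1) (q + 1) : ZMod 2) := by
        intro r
        induction r with
        | zero =>
          intro _
          have h := hrec (q * (b + 1))
          rw [show q * (b + 1) + b + 1 = (q + 1) * (b + 1) + 0 by ring] at h
          rw [h]
          rw [show (0 : ℕ) + (q + 1) - 1 = q by omega,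
            Nat.choose_eq_zero_of_lt (Nat.lt_succ_self q), Nat.cast_zero]
          rcases Nat.eq_zero_or_pos q with rfl | hqpos
          · rw [show (0 : ℕ) * (b + 1) + b = b by ring, show (0:ℕ) * (b+1) = 0 by ring,
              hinit b le_rfl, hinit 0 (by omega)]
            decide
          · have h1 := ih hq b (by omega) (by omega)
            have h2 := ih hq 0 (by omega) (by omega)
            rw [show q * (b + 1) + 0 = q * (b + 1) by ring,
              show (0 : ℕ) + q - 1 = q - 1 by omega,
              Nat.choose_eq_zero_of_lt (show q - 1 < q by omega), Nat.cast_zero] at h2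
            rw [h1, h2, add_zero]
            have hdvd : 2 ∣ (b + q - 1).choose q := by
              have := even_choose_aux e c q hcpos hqpos (by omega)
              rwa [show 2 ^ e * c - 1 + q = b + q - 1 by omega] at this
            exact (ZMod.natCast_eq_zero_iff _ 2).mpr hdvd
        | succ r ihr =>
          intro hr
          have h := hrec (q * (b + 1) + r + 1)
          rw [show q * (b + 1) + r + 1 + b + 1 = (q + 1) * (b + 1) + (r + 1) by ring,
            show q * (b + 1) + r + 1 + b = (q + 1) * (b + 1) + r by ring,
            show q * (b + 1) + r + 1 = q * (b + 1) + (r + 1) by ring] at h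
          rw [h, ihr (by omega), ih hq (r + 1) hr (by omega)]
          rw [show r + (q + 1) - 1 = r + q by omega,
            show r + 1 + q - 1 = r + q by omega,
            show r + 1 + (q + 1) - 1 = (r + q) + 1 by omega,
            Nat.choose_succ_succ (r + q) q]
          push_cast
          ring
      intro r hr _
      exact inner r hr
  intro q r hq hr hne
  exact main q hq r hr hne
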